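/- The map H_III^B(α,β) is an involution: if (u,v) = H_III^B(α,β)(x,y) with αxy+1 ≠ 0 and βxy+1 ≠ 0, then uv = xy and H_III^B(α,β)(u,v) = (x,y). -/

import Mathlib

/-- the map H_III^B -/
def HIIIBMap {K : Type*} [Field K] (a b : K) : K × K → K × K :=
  fun p => (p.2 * ((b*p.1*p.2 + 1)/(a*p.1*p.2 + 1)), p.1 * ((a*p.1*p.2 + 1)/(b*p.1*p.2 + 1)))

theorem HIIIB_involution {K : Type*} [Field K] (a b x y : K)
    (ha : a*x*y + 1 ≠ 0) (hb : b*x*y + 1 ≠ 0) :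
    (HIIIBMap a b (x, y)).1 * (HIIIBMap a b (x, y)).2 = x * y ∧
      HIIIBMap a b (HIIIBMap a b (x, y)) = (x, y) := by
  have huv : (HIIIBMap a b (x, y)).1 * (HIIIBMap a b (x, y)).2 = x * y := by
    simp only [HIIIBMap]
    field_simp
    rw [div_eq_iff (mul_ne_zero (by contrapose! hb; linear_combination hb) (by contrapose! ha; linear_combination ha))]; ring
  refine ⟨huv, ?_⟩
  simp only [HIIIBMap] at huv ⊢
  rw [show a * (y * ((b * x * y + 1) / (a * x * y + 1))) *
        (x * ((a * x * y + 1) / (b * x * y + 1))) = a * (x * y) by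
      rw [mul_assoc a, huv],
    show b * (y * ((b * x * y + 1) / (a * x * y + 1))) *
        (x * ((a * x * y + 1) / (b * x * y + 1))) = b * (x * y) by
      rw [mul_assoc b, huv]]
  have ha' : a * (x * y) + 1 ≠ 0 := by rwa [← mul_assoc]
  have hb' : b * (x * y) + 1 ≠ 0 := by rwa [← mul_assoc]
  refine Prod.ext ?_ ?_ <;> simp only [] <;> field_simp
  · rw [div_eq_iff (mul_ne_zero (by contrapose! ha; linear_combination ha) (by contrapose! hb; linear_combination hb))]; ring
  · rw [div_eq_iff (mul_ne_zero (by contrapose! hb; linear_combination hb) (by contrapose! ha; linear_combination ha))]; ring
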